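/- Let p be a real polynomial of degree at most N (N ≥ 1) with |p(t)| > 0 for all t in the open interval (a,b). Then for every ε with 0 < ε < 2^(−N), the Lebesgue measure of the set {t ∈ (a,b) : |p(t)| < ε|p(b)|} is at most 2N·ε^(1/(2N))·(b − a). -/

import Mathlib

open MeasureTheory Polynomial

private lemma my_prod_le {s : Multiset ℂ} (f g : ℂ → ℝ)
    (h0 : ∀ z ∈ s, 0 ≤ f z) (h : ∀ z ∈ s, f z ≤ g z) :
    (s.map f).prod ≤ (s.map g).prod := by
  induction s using Multiset.induction_on with
  | empty => simp
  | cons a s ih =>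
    simp only [Multiset.map_cons, Multiset.prod_cons]
    have hf : 0 ≤ (s.map f).prod := Multiset.prod_nonneg (by
      intro x hx
      obtain ⟨z, hz, rfl⟩ := Multiset.mem_map.mp hx
      exact h0 z (Multiset.mem_cons_of_mem hz))
    exact mul_le_mul (h a (Multiset.mem_cons_self a s))
      (ih (fun z hz => h0 z (Multiset.mem_cons_of_mem hz))
          (fun z hz => h z (Multiset.mem_cons_of_mem hz)))
      hf ((h0 a (Multiset.mem_cons_self a s)).trans (h a (Multiset.mem_cons_self a s)))

private lemma my_prod_const_mul (s : Multiset ℂ) (c : ℝ) (f : ℂ → ℝ) :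
    (s.map fun z => c * f z).prod = c ^ Multiset.card s * (s.map f).prod := by
  induction s using Multiset.induction_on with
  | empty => simp
  | cons a s ih =>
    simp only [Multiset.map_cons, Multiset.prod_cons, Multiset.card_cons, ih, pow_succ]
    ring

set_option maxHeartbeats 1000000 in
theorem stmt2 (N : ℕ) (hN : 1 ≤ N) (p : Polynomial ℝ) (hdeg : p.natDegree ≤ N)
    (a b : ℝ) (hab : a < b) (hp : ∀ t ∈ Set.Ioo a b, 0 < |p.eval t|)
    (ε : ℝ) (hε0 : 0 < ε) (hε : ε < (2:ℝ) ^ (-(N:ℝ))) :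
    volume {t ∈ Set.Ioo a b | |p.eval t| < ε * |p.eval b|} ≤
      ENNReal.ofReal (2 * N * ε ^ ((1:ℝ)/(2*N)) * (b - a)) := by
  have hNR : (0:ℝ) < N := by exact_mod_cast hN
  set u : ℝ := ε ^ ((1:ℝ)/(2*N)) with hu_def
  have hu0 : 0 < u := Real.rpow_pos_of_pos hε0 _
  have hε1 : ε ≤ 1 := by
    have : (2:ℝ) ^ (-(N:ℝ)) ≤ 1 := by
      apply Real.rpow_le_one_of_one_le_of_nonpos (by norm_num)
      simp [hNR.le]
    linarith
  set E := {t ∈ Set.Ioo a b | |p.eval t| < ε * |p.eval b|} with hE_def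
  by_cases hcase : (1:ℝ) ≤ 2*N*u
  · -- trivial case
    calc volume E ≤ volume (Set.Ioo a b) := measure_mono (fun t ht => ht.1)
    _ = ENNReal.ofReal (b - a) := by simp
    _ ≤ ENNReal.ofReal (2 * N * u * (b - a)) := by
        apply ENNReal.ofReal_le_ofReal
        nlinarith
  push_neg at hcase
  -- now 2Nu < 1, hence u ≤ 1/2
  have h1N : (1:ℝ) ≤ N := by exact_mod_cast hN
  have hu_half : u ≤ 1/2 := by nlinarith [mul_le_mul_of_nonneg_right h1N hu0.le]
  set v : ℝ := ε ^ ((1:ℝ)/N) with hv_def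
  have hv0 : 0 < v := Real.rpow_pos_of_pos hε0 _
  have hvu : v = u^2 := by
    rw [hu_def, hv_def, ← Real.rpow_natCast (ε ^ ((1:ℝ)/(2*N))) 2, ← Real.rpow_mul hε0.le]
    congr 1
    push_cast
    field_simp
  have hv_half : v ≤ 1/2 := by nlinarith
  by_cases hb : p.eval b = 0
  · have : E = ∅ := by
      ext t
      simp only [hE_def, Set.mem_setOf_eq, Set.mem_empty_iff_false, iff_false, not_and]
      intro _
      rw [hb]
      simp [abs_nonneg]
    rw [this]
    simp
  -- p ≠ 0
  have hp0 : p ≠ 0 := fun h => hb (by simp [h])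
  set q : Polynomial ℂ := p.map (algebraMap ℝ ℂ) with hq_def
  have hq0 : q ≠ 0 := (Polynomial.map_ne_zero_iff (algebraMap ℝ ℂ).injective).mpr hp0
  -- eval identity
  have heval : ∀ x : ℝ, q.eval (x:ℂ) = ((p.eval x : ℝ) : ℂ) := by
    intro x
    rw [hq_def, Polynomial.eval_map]
    exact Polynomial.eval₂_at_apply (algebraMap ℝ ℂ) x
  have hfact : q = Polynomial.C q.leadingCoeff * (q.roots.map fun z => X - C z).prod :=
    (IsAlgClosed.splits q).eq_prod_roots
  have habs : ∀ x : ℝ, |p.eval x|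
      = ‖q.leadingCoeff‖ * (q.roots.map fun z => ‖(x:ℂ) - z‖).prod := by
    intro x
    have h1 : |p.eval x| = ‖q.eval (x:ℂ)‖ := by
      rw [heval x, Complex.norm_real, Real.norm_eq_abs]
    rw [h1]
    conv_lhs => rw [hfact]
    rw [Polynomial.eval_mul, Polynomial.eval_C, norm_mul, Polynomial.eval_multiset_prod,
      show ∀ m : Multiset ℂ, ‖m.prod‖ = (m.map (‖·‖)).prod from fun m => map_multiset_prod (normHom (α := ℂ)) m, Multiset.map_map, Multiset.map_map]
    refine congrArg _ (congrArg Multiset.prod (Multiset.map_congr rfl ?_))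
    intro z hz
    simp
  have hlc0 : 0 < ‖q.leadingCoeff‖ := by
    simp [norm_pos_iff, Polynomial.leadingCoeff_ne_zero, hq0]
  have hcard : (Multiset.card q.roots : ℕ) ≤ N := by
    have h1 : Multiset.card q.roots ≤ q.natDegree := Polynomial.card_roots' q
    have h2 : q.natDegree = p.natDegree := Polynomial.natDegree_map_eq_of_injective (algebraMap ℝ ℂ).injective p
    omega
  -- product at b is positive
  have hbroots : ∀ z ∈ q.roots, (0:ℝ) < ‖(b:ℂ) - z‖ := by
    intro z hz
    rw [norm_pos_iff, sub_ne_zero]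
    intro h
    apply hb
    have h0 : q.eval ((b:ℝ):ℂ) = 0 := by
      rw [h]; exact Polynomial.isRoot_of_mem_roots hz
    rw [heval b] at h0
    exact_mod_cast h0
  have hPb : (0:ℝ) < (q.roots.map fun z => ‖(b:ℂ) - z‖).prod := by
    apply Multiset.prod_pos
    intro x hx
    obtain ⟨z, hz, rfl⟩ := Multiset.mem_map.mp hx
    exact hbroots z hz
  -- pigeonhole
  have key : ∀ t ∈ E, ∃ z ∈ q.roots, ‖(t:ℂ) - z‖ < v * ‖(b:ℂ) - z‖ := by
    intro t ht
    by_contra hcon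
    push_neg at hcon
    have hge : (q.roots.map fun z => v * ‖(b:ℂ) - z‖).prod
        ≤ (q.roots.map fun z => ‖(t:ℂ) - z‖).prod := by
      apply my_prod_le
      · intro z hz; positivity
      · intro z hz; exact hcon z hz
    have hsplitprod : (q.roots.map fun z => v * ‖(b:ℂ) - z‖).prod
        = v ^ (Multiset.card q.roots) * (q.roots.map fun z => ‖(b:ℂ) - z‖).prod :=
      my_prod_const_mul _ _ _
    have hvn : ε ≤ v ^ (Multiset.card q.roots) := by
      rw [hv_def, ← Real.rpow_natCast (ε ^ ((1:ℝ)/N)) _, ← Real.rpow_mul hε0.le]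
      nth_rewrite 1 [← Real.rpow_one ε]
      apply Real.rpow_le_rpow_of_exponent_ge hε0 hε1
      rw [one_div, ← div_eq_inv_mul]
      apply div_le_one_of_le₀
      · exact_mod_cast hcard
      · exact hNR.le
    have hlt : |p.eval t| < ε * |p.eval b| := ht.2
    rw [habs t, habs b] at hlt
    have h1 : ε * (q.roots.map fun z => ‖(b:ℂ) - z‖).prod
        ≤ (q.roots.map fun z => ‖(t:ℂ) - z‖).prod := by
      calc ε * (q.roots.map fun z => ‖(b:ℂ) - z‖).prod
          ≤ v ^ (Multiset.card q.roots) * (q.roots.map fun z => ‖(b:ℂ) - z‖).prod :=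
            mul_le_mul_of_nonneg_right hvn hPb.le
      _ = _ := hsplitprod.symm
      _ ≤ _ := hge
    have h2 := mul_le_mul_of_nonneg_left h1 hlc0.le
    nlinarith [h2, hlt]
  -- covering
  set r : ℝ := 2 * v * (b - a) with hr_def
  have hba : (0:ℝ) < b - a := by linarith
  have hr0 : 0 < r := by rw [hr_def]; positivity
  have hcover : E ⊆ ⋃ z ∈ q.roots.toFinset, Set.Ioo (z.re - r) (z.re + r) := by
    intro t ht
    obtain ⟨z, hz, hlt⟩ := key t ht
    have hbz : ‖(b:ℂ) - z‖ ≤ (b - a) + ‖(t:ℂ) - z‖ := by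
      calc ‖(b:ℂ) - z‖ ≤ ‖(b:ℂ) - t‖ + ‖(t:ℂ) - z‖ := by
            have := norm_sub_le_norm_sub_add_norm_sub (b:ℂ) (t:ℂ) z
            linarith [this]
      _ ≤ (b - a) + ‖(t:ℂ) - z‖ := by
            have : ‖(b:ℂ) - (t:ℂ)‖ = |b - t| := by
              rw [← Complex.ofReal_sub, Complex.norm_real, Real.norm_eq_abs]
            rw [this]
            have h1 := ht.1.1
            have h2 := ht.1.2
            have : |b - t| ≤ b - a := by rw [abs_of_nonneg (by linarith)]; linarith
            linarith
    have htz : ‖(t:ℂ) - z‖ < r := by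
      have h1 : ‖(t:ℂ) - z‖ < v * ((b-a) + ‖(t:ℂ) - z‖) :=
        lt_of_lt_of_le hlt (by nlinarith [hbz])
      nlinarith [norm_nonneg ((t:ℂ) - z)]
    have hre : |t - z.re| < r := by
      have := Complex.abs_re_le_norm ((t:ℂ) - z)
      simp only [Complex.sub_re, Complex.ofReal_re] at this
      linarith [this, htz]
    simp only [Set.mem_iUnion]
    refine ⟨z, Multiset.mem_toFinset.mpr hz, ?_⟩
    rw [Set.mem_Ioo]
    rw [abs_lt] at hre
    constructor <;> linarith [hre.1, hre.2]
  calc volume E ≤ volume (⋃ z ∈ q.roots.toFinset, Set.Ioo (z.re - r) (z.re + r)) :=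
        measure_mono hcover
  _ ≤ ∑ z ∈ q.roots.toFinset, volume (Set.Ioo (z.re - r) (z.re + r)) :=
        measure_biUnion_finset_le _ _
  _ = ∑ z ∈ q.roots.toFinset, ENNReal.ofReal (2*r) := by
        apply Finset.sum_congr rfl
        intro z _
        rw [Real.volume_Ioo]
        congr 1
        ring
  _ = (q.roots.toFinset.card : ℕ) * ENNReal.ofReal (2*r) := by
        rw [Finset.sum_const, nsmul_eq_mul]
  _ ≤ (N : ℕ) * ENNReal.ofReal (2*r) := by
        gcongr
        exact_mod_cast le_trans (Multiset.toFinset_card_le _) hcard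
  _ = ENNReal.ofReal (N * (2*r)) := by
        rw [ENNReal.ofReal_mul (by positivity : (0:ℝ) ≤ (N:ℝ)), ENNReal.ofReal_natCast]
  _ ≤ ENNReal.ofReal (2 * N * u * (b - a)) := by
        apply ENNReal.ofReal_le_ofReal
        have h2v : 2 * v ≤ u := by nlinarith
        have hstep := mul_le_mul_of_nonneg_right
          (mul_le_mul_of_nonneg_left h2v (by positivity : (0:ℝ) ≤ 2*N)) hba.le
        rw [hr_def]
        nlinarith [hstep]
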